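/- Let G be a hereditarily non-topologizable group and let H be a subgroup of G. If H is solvable, then H is finite. -/

import Mathlib

noncomputable def ratCircleHom : AddCircle (1:ℚ) →+ AddCircle (1:ℝ) :=
  QuotientAddGroup.map _ _ (Rat.castHom ℝ).toAddMonoidHom (by
    intro x hx
    obtain ⟨n, rfl⟩ := hx
    refine AddSubgroup.mem_comap.2 ⟨n, ?_⟩
    push_cast
    simp)

lemma ratCircleHom_injective : Function.Injective ratCircleHom := by
  rw [injective_iff_map_eq_zero]
  intro x hx
  induction x using QuotientAddGroup.induction_on with
  | H q =>
    have h2 : ((q:ℝ) : AddCircle (1:ℝ)) = 0 := hx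
    rw [QuotientAddGroup.eq_zero_iff] at h2 ⊢
    obtain ⟨n, hn⟩ := h2
    have h3 : ((n:ℚ):ℝ) = (q:ℝ) := by push_cast; simpa using hn
    have h4 : (n:ℚ) = q := by exact_mod_cast h3
    exact ⟨n, by simpa using h4⟩

lemma finite_of_nonTop_addComm (A : Type*) [AddCommGroup A]
    (h : ∀ t : TopologicalSpace A, @IsTopologicalAddGroup A t _ → @T2Space A t → t = ⊥) :
    Finite A := by
  haveI : Fact ((0:ℝ) < 1) := ⟨one_pos⟩
  classical
  let f : A →+ (CharacterModule A → AddCircle (1:ℝ)) :=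
    { toFun := fun a χ => ratCircleHom (χ a)
      map_zero' := by funext χ; simp
      map_add' := by intro a b; funext χ; simp }
  have hf : Function.Injective f := by
    rw [injective_iff_map_eq_zero]
    intro a ha
    by_contra hne
    obtain ⟨χ, hχ⟩ := CharacterModule.exists_character_apply_ne_zero_of_ne_zero hne
    have : ratCircleHom (χ a) = 0 := congrFun ha χ
    exact hχ (ratCircleHom_injective (by simpa using this))
  let t : TopologicalSpace A := TopologicalSpace.induced f inferInstance
  have htg : @IsTopologicalAddGroup A t _ := topologicalAddGroup_induced f
  have ht2 : @T2Space A t := by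
    letI := t
    have he : Topology.IsEmbedding f := ⟨⟨rfl⟩, hf⟩
    exact he.t2Space
  have hbot : t = ⊥ := h t htg ht2
  have hopen : @IsOpen A t {(0:A)} :=
    hbot ▸ (@isOpen_discrete _ ⊥ (discreteTopology_bot A) {(0:A)})
  rw [isOpen_induced_iff] at hopen
  obtain ⟨U, hU, hU0⟩ := hopen
  set D : AddSubgroup (CharacterModule A → AddCircle (1:ℝ)) := f.range with hD
  haveI : DiscreteTopology ↥D := by
    apply discreteTopology_of_isOpen_singleton_zero
    have hset : ({0} : Set ↥D) = (Subtype.val) ⁻¹' U := by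
      ext x
      constructor
      · rintro rfl
        show (0 : CharacterModule A → AddCircle (1:ℝ)) ∈ U
        have : (0:A) ∈ f ⁻¹' U := by rw [hU0]; rfl
        simpa using this
      · intro hx
        obtain ⟨a, ha⟩ := x.2
        have : a ∈ f ⁻¹' U := by rw [Set.mem_preimage, ha]; exact hx
        rw [hU0] at this
        have ha0 : a = 0 := this
        ext
        rw [← ha, ha0, map_zero]
        rfl
    rw [hset]
    exact hU.preimage continuous_subtype_val
  have hclosed : IsClosed (D : Set (CharacterModule A → AddCircle (1:ℝ))) := AddSubgroup.isClosed_of_discrete (H := D)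
  have hcomp : IsCompact (D : Set (CharacterModule A → AddCircle (1:ℝ))) := hclosed.isCompact
  haveI : CompactSpace ↥D := isCompact_iff_compactSpace.1 hcomp
  haveI : Finite ↥D := finite_of_compact_of_discrete
  exact Finite.of_injective (fun a => (⟨f a, ⟨a, rfl⟩⟩ : ↥D))
    (fun a b hab => hf (congrArg Subtype.val hab))


def NonTopologizable (G : Type*) [Group G] : Prop :=
  ∀ t : TopologicalSpace G, @IsTopologicalGroup G t _ → @T2Space G t → t = ⊥

def HereditarilyNonTopologizable (G : Type*) [Group G] : Prop :=
  ∀ (H : Subgroup G) (N : Subgroup ↥H) [N.Normal], NonTopologizable (↥H ⧸ N)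

lemma finite_of_nonTop_comm (A : Type*) [Group A] (hc : ∀ a b : A, a * b = b * a)
    (h : NonTopologizable A) : Finite A := by
  letI : CommGroup A := { ‹Group A› with mul_comm := hc }
  have : Finite (Additive A) := by
    apply finite_of_nonTop_addComm
    intro t ht h2
    refine h t ?_ h2
    letI : TopologicalSpace A := t
    exact { toContinuousMul := ⟨ht.toContinuousAdd.continuous_add⟩,
            toContinuousInv := ⟨ht.toContinuousNeg.continuous_neg⟩ }
  exact Finite.of_equiv (Additive A) Additive.toMul

open scoped commutatorElement in
lemma aux {G : Type*} [Group G] (hG : HereditarilyNonTopologizable G) :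
    ∀ n (K : Subgroup G), derivedSeries ↥K n = ⊥ → Finite ↥K := by
  intro n
  induction n with
  | zero =>
    intro K hK
    rw [derivedSeries_zero] at hK
    have hsub : Subsingleton ↥K := ⟨fun a b => by
      have ha : a ∈ (⊥ : Subgroup ↥K) := hK ▸ Subgroup.mem_top a
      have hb : b ∈ (⊥ : Subgroup ↥K) := hK ▸ Subgroup.mem_top b
      rw [Subgroup.mem_bot] at ha hb
      rw [ha, hb]⟩
    exact Finite.of_subsingleton
  | succ n ih =>
    intro K hK
    set N : Subgroup ↥K := commutator ↥K with hNdef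
    -- quotient is finite
    have hq : Finite (↥K ⧸ N) := by
      apply finite_of_nonTop_comm
      · intro a b
        induction a using QuotientGroup.induction_on with
        | H x =>
        induction b using QuotientGroup.induction_on with
        | H y =>
        rw [← QuotientGroup.mk_mul, ← QuotientGroup.mk_mul, QuotientGroup.eq]
        have heq : (x*y)⁻¹ * (y*x) = ⁅y⁻¹, x⁻¹⁆ := by group
        rw [heq, hNdef, commutator_def]
        exact Subgroup.commutator_mem_commutator (Subgroup.mem_top _) (Subgroup.mem_top _)
      · exact hG K N
    -- N is finite
    have key : ∀ m, Subgroup.map N.subtype (derivedSeries ↥N m) ≤ derivedSeries ↥K (m+1) := by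
      intro m
      induction m with
      | zero =>
        rw [derivedSeries_zero, ← MonoidHom.range_eq_map, Subgroup.range_subtype,
          derivedSeries_one]
      | succ m ihm =>
        rw [derivedSeries_succ, Subgroup.map_commutator, derivedSeries_succ]
        exact Subgroup.commutator_mono ihm ihm
    have hNn : derivedSeries ↥N n = ⊥ := by
      have h1 := key n
      rw [hK] at h1
      exact (Subgroup.map_eq_bot_iff_of_injective _ N.subtype_injective).1 (le_bot_iff.1 h1)
    set L : Subgroup G := N.map K.subtype with hLdef
    have e : ↥N ≃* ↥L := Subgroup.equivMapOfInjective N K.subtype K.subtype_injective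
    have hLn : derivedSeries ↥L n = ⊥ := by
      have h2 := derivedSeries_le_map_derivedSeries (f := e.toMonoidHom)
        (fun y => ⟨e.symm y, by simp⟩) n
      rw [hNn, Subgroup.map_bot] at h2
      exact le_bot_iff.1 h2
    have hLfin : Finite ↥L := ih L hLn
    have hNfin : Finite ↥N := Finite.of_equiv ↥L e.symm
    exact Finite.of_equiv _ (Subgroup.groupEquivQuotientProdSubgroup (s := N)).symm

theorem solvable_subgroup_finite {G : Type*} [Group G]
    (hG : HereditarilyNonTopologizable G) (H : Subgroup G) [Group.IsSolvable ↥H] :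
    Finite ↥H := by
  obtain ⟨n, hn⟩ := Group.IsSolvable.solvable (G := ↥H)
  exact aux hG n H hn
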